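/- Let (Xₙ) be simple random walk on ℤ started at 0 and Mₙ = max_{k≤n} X_k. Then for every ε ∈ (0, 1/2), almost surely Mₙ ≥ n^{1/2−ε} for all but finitely many n. -/

import Mathlib

open Finset MeasureTheory ProbabilityTheory Filter ENNReal

namespace SRWAux
noncomputable section
open Classical

def bstep (b : Bool) : ℤ := bif b then 1 else -1

def stepAt (n : ℕ) (v : Fin n → Bool) (i : ℕ) : ℤ :=
  if h : i < n then bstep (v ⟨i, h⟩) else 0

def W (n : ℕ) (v : Fin n → Bool) (k : ℕ) : ℤ :=
  ∑ i ∈ Finset.range k, stepAt n v i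

lemma bstep_not (b : Bool) : bstep (!b) = - bstep b := by cases b <;> simp [bstep]

lemma abs_stepAt (n v i) : |stepAt n v i| ≤ 1 := by
  unfold stepAt; split
  · rename_i h; cases v ⟨i, h⟩ <;> simp [bstep]
  · simp

lemma W_zero (n v) : W n v 0 = 0 := by simp [W]

lemma W_succ (n v k) : W n v (k+1) = W n v k + stepAt n v k := by
  simp [W, Finset.sum_range_succ]

lemma abs_W_succ_sub (n v k) : |W n v (k+1) - W n v k| ≤ 1 := by
  rw [W_succ]; simpa using abs_stepAt n v k

/-- discrete IVT -/
lemma exists_eq_of_le (f : ℕ → ℤ) (hstep : ∀ k, |f (k+1) - f k| ≤ 1) (x : ℤ) :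
    ∀ n, f 0 ≤ x → x ≤ f n → ∃ k ≤ n, f k = x := by
  intro n
  induction n with
  | zero => intro h1 h2; exact ⟨0, le_refl _, le_antisymm h1 h2⟩
  | succ m ih =>
    intro h1 h2
    by_cases hx : x ≤ f m
    · obtain ⟨k, hk, hfk⟩ := ih h1 hx
      exact ⟨k, hk.trans (Nat.le_succ m), hfk⟩
    · push_neg at hx
      have : f (m+1) = x := by
        have h3 := abs_le.mp (hstep m)
        omega
      exact ⟨m+1, le_refl _, this⟩

variable (n : ℕ) (x : ℤ)

/-- first hitting time of `x` -/
def tau (v : Fin n → Bool) : ℕ :=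
  if h : ∃ k, W n v k = x then Nat.find h else 0

lemma tau_spec {v : Fin n → Bool} (h : ∃ k, W n v k = x) :
    W n v (tau n x v) = x ∧ ∀ k < tau n x v, W n v k ≠ x := by
  rw [tau, dif_pos h]
  exact ⟨Nat.find_spec h, fun k hk => Nat.find_min h hk⟩

lemma tau_le {v : Fin n → Bool} {k : ℕ} (hk : W n v k = x) : tau n x v ≤ k := by
  rw [tau, dif_pos ⟨k, hk⟩]
  exact Nat.find_le hk

/-- reflection map -/
def R (v : Fin n → Bool) : Fin n → Bool :=
  fun i => if tau n x v ≤ (i : ℕ) then !(v i) else v i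

lemma stepAt_R_lt {v : Fin n → Bool} {i : ℕ} (hi : i < tau n x v) :
    stepAt n (R n x v) i = stepAt n v i := by
  unfold stepAt; split
  · simp [R, Nat.not_le.mpr hi]
  · rfl

lemma stepAt_R_ge {v : Fin n → Bool} {i : ℕ} (hi : tau n x v ≤ i) :
    stepAt n (R n x v) i = - stepAt n v i := by
  unfold stepAt; split
  · simp [R, hi, bstep_not]
  · simp

lemma W_R_le {v : Fin n → Bool} {k : ℕ} (hk : k ≤ tau n x v) :
    W n (R n x v) k = W n v k := by
  unfold W
  exact Finset.sum_congr rfl fun i hi =>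
    stepAt_R_lt n x (lt_of_lt_of_le (Finset.mem_range.mp hi) hk)

lemma W_R_ge {v : Fin n → Bool} {k : ℕ} (hk : tau n x v ≤ k) :
    W n (R n x v) k = 2 * W n v (tau n x v) - W n v k := by
  have h1 : ∀ w : Fin n → Bool, W n w k = W n w (tau n x v) + ∑ i ∈ Finset.Ico (tau n x v) k, stepAt n w i := by
    intro w
    unfold W
    rw [Finset.range_eq_Ico, ← Finset.sum_Ico_consecutive _ (Nat.zero_le _) hk, ← Finset.range_eq_Ico]
  rw [h1, h1, W_R_le n x (le_refl _)]
  have : ∑ i ∈ Finset.Ico (tau n x v) k, stepAt n (R n x v) i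
      = - ∑ i ∈ Finset.Ico (tau n x v) k, stepAt n v i := by
    rw [← Finset.sum_neg_distrib]
    exact Finset.sum_congr rfl fun i hi => stepAt_R_ge n x (Finset.mem_Ico.mp hi).1
  rw [this]; ring

def T (v : Fin n → Bool) : ℕ := (Finset.univ.filter (fun i => v i)).card

lemma W_n_eq (v : Fin n → Bool) : W n v n = 2 * (T n v : ℤ) - n := by
  have h1 : W n v n = ∑ i : Fin n, bstep (v i) := by
    rw [W, ← Fin.sum_univ_eq_sum_range (fun i => stepAt n v i) n]
    exact Finset.sum_congr rfl fun i _ => by simp [stepAt, i.isLt]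
  rw [h1, ← Finset.sum_filter_add_sum_filter_not Finset.univ (fun i => v i = true)]
  have h2 : ∀ i ∈ Finset.univ.filter (fun i : Fin n => v i = true), bstep (v i) = 1 := by
    intro i hi; simp at hi; simp [hi, bstep]
  have h3 : ∀ i ∈ Finset.univ.filter (fun i : Fin n => ¬ (v i = true)), bstep (v i) = -1 := by
    intro i hi; simp at hi; simp [hi, bstep]
  rw [Finset.sum_congr rfl h2, Finset.sum_congr rfl h3, Finset.sum_const, Finset.sum_const]
  have h4 := Finset.card_filter_add_card_filter_not (s := (Finset.univ : Finset (Fin n)))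
    (p := fun i : Fin n => v i = true)
  simp only [Finset.card_univ, Fintype.card_fin] at h4
  have : (Finset.univ.filter (fun i : Fin n => v i = true)).card = T n v := rfl
  rw [this] at h4
  simp only [nsmul_eq_mul, mul_one, mul_neg]
  push_cast
  omega

lemma count_T (t : ℕ) :
    ((Finset.univ.filter (fun v : Fin n → Bool => T n v = t)).card) ≤ n.choose t := by
  have := Finset.card_le_card_of_injOn (f := fun v : Fin n → Bool => Finset.univ.filter (fun i => v i))
    (s := Finset.univ.filter (fun v : Fin n → Bool => T n v = t))
    (t := Finset.powersetCard t (Finset.univ : Finset (Fin n)))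
    (by intro v hv
        simp only [Finset.mem_coe, Finset.mem_filter] at hv
        exact Finset.mem_powersetCard.mpr ⟨Finset.subset_univ _, hv.2⟩)
    (by intro v hv w hw h
        funext i
        have := Finset.ext_iff.mp h i
        simp only [Finset.mem_filter, Finset.mem_univ, true_and] at this
        exact Bool.coe_iff_coe.mp this)
  rwa [Finset.card_powersetCard, Finset.card_univ, Fintype.card_fin] at this

lemma count_end (k : ℤ) :
    ((Finset.univ.filter (fun v : Fin n → Bool => W n v n = k)).card) ≤ n.choose (n / 2) := by
  by_cases h : ∃ t : ℕ, 2 * (t : ℤ) - n = k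
  · obtain ⟨t, ht⟩ := h
    calc ((Finset.univ.filter (fun v : Fin n → Bool => W n v n = k)).card)
        ≤ ((Finset.univ.filter (fun v : Fin n → Bool => T n v = t)).card) := by
          apply Finset.card_le_card
          intro v hv
          simp only [Finset.mem_filter, Finset.mem_univ, true_and] at hv ⊢
          have := W_n_eq n v
          omega
      _ ≤ n.choose t := count_T n t
      _ ≤ n.choose (n / 2) := Nat.choose_le_middle t n
  · have : (Finset.univ.filter (fun v : Fin n → Bool => W n v n = k)) = ∅ := by
      apply Finset.filter_eq_empty_iff.mpr
      intro v _
      have := W_n_eq n v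
      intro hc
      exact h ⟨T n v, by omega⟩
    simp [this]


lemma W_neg (v : Fin n → Bool) (k : ℕ) :
    W n (fun i => !(v i)) k = - W n v k := by
  unfold W
  rw [← Finset.sum_neg_distrib]
  apply Finset.sum_congr rfl
  intro i _
  unfold stepAt
  split
  · rw [bstep_not]
  · simp

lemma tau_le_tau {v w : Fin n → Bool} (hv : ∃ k, W n v k = x)
    (h : R n x v = R n x w) : tau n x w ≤ tau n x v := by
  by_contra hlt
  push_neg at hlt
  have h1 : W n (R n x v) (tau n x v) = x := by
    rw [W_R_le n x (le_refl _)]; exact (tau_spec n x hv).1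
  have h2 : W n (R n x w) (tau n x v) = W n w (tau n x v) :=
    W_R_le n x (le_of_lt hlt)
  rw [h] at h1
  rw [h2] at h1
  exact absurd (tau_le n x h1) (Nat.not_le.mpr hlt)

lemma R_injOn {v w : Fin n → Bool} (hv : ∃ k, W n v k = x) (hw : ∃ k, W n w k = x)
    (h : R n x v = R n x w) : v = w := by
  have ht : tau n x v = tau n x w :=
    le_antisymm (tau_le_tau n x hw h.symm) (tau_le_tau n x hv h)
  funext i
  have hi := congrFun h i
  unfold R at hi
  rw [ht] at hi
  by_cases hc : tau n x w ≤ (i : ℕ)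
  · rw [if_pos hc, if_pos hc] at hi
    exact Bool.not_inj hi
  · rwa [if_neg hc, if_neg hc] at hi

theorem count_main (hx : 0 ≤ x) :
    ((Finset.univ.filter (fun v : Fin n → Bool => ∀ k ≤ n, W n v k < x)).card : ℤ)
      ≤ (2 * x + 1) * n.choose (n / 2) := by
  set A := Finset.univ.filter (fun v : Fin n → Bool => x < W n v n) with hA
  set B := Finset.univ.filter
    (fun v : Fin n → Bool => (∃ k ≤ n, x ≤ W n v k) ∧ W n v n < x) with hB
  set G := Finset.univ.filter (fun v : Fin n → Bool => ∃ k ≤ n, x ≤ W n v k) with hG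
  set A' := Finset.univ.filter (fun v : Fin n → Bool => W n v n < -x) with hA'
  set Mid := Finset.univ.filter
    (fun v : Fin n → Bool => -x ≤ W n v n ∧ W n v n ≤ x) with hMid
  set bad := Finset.univ.filter (fun v : Fin n → Bool => ∀ k ≤ n, W n v k < x) with hbad
  -- hit facts for members of A
  have hhit : ∀ v ∈ A, ∃ k, W n v k = x := by
    intro v hv
    rw [hA, Finset.mem_filter] at hv
    obtain ⟨k, _, hk⟩ := exists_eq_of_le (W n v) (abs_W_succ_sub n v) x n
      (by rw [W_zero]; exact hx) (le_of_lt hv.2)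
    exact ⟨k, hk⟩
  have htau_n : ∀ v ∈ A, tau n x v ≤ n := by
    intro v hv
    rw [hA, Finset.mem_filter] at hv
    obtain ⟨k, hkn, hk⟩ := exists_eq_of_le (W n v) (abs_W_succ_sub n v) x n
      (by rw [W_zero]; exact hx) (le_of_lt hv.2)
    exact le_trans (tau_le n x hk) hkn
  -- f1 : reflection
  have f1 : A.card ≤ B.card := by
    apply Finset.card_le_card_of_injOn (R n x)
    · intro v hv
      have hhv := hhit v hv
      have htn := htau_n v hv
      have hWtau := (tau_spec n x hhv).1
      rw [hA, Finset.mem_coe, Finset.mem_filter] at hv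
      rw [hB, Finset.mem_coe, Finset.mem_filter]
      refine ⟨Finset.mem_univ _, ⟨tau n x v, htn, ?_⟩, ?_⟩
      · rw [W_R_le n x (le_refl _), hWtau]
      · rw [W_R_ge n x htn, hWtau]
        linarith [hv.2]
    · intro v hv w hw h
      exact R_injOn n x (hhit v hv) (hhit w hw) h
  -- f2
  have f2 : A.card + B.card ≤ G.card := by
    rw [← Finset.card_union_of_disjoint]
    · apply Finset.card_le_card
      intro v hv
      rw [Finset.mem_union, hA, hB, Finset.mem_filter, Finset.mem_filter] at hv
      rw [hG, Finset.mem_filter]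
      rcases hv with hv | hv
      · exact ⟨Finset.mem_univ _, n, le_refl _, le_of_lt hv.2⟩
      · exact ⟨Finset.mem_univ _, hv.2.1⟩
    · rw [Finset.disjoint_left]
      intro v hv hv'
      rw [hA, Finset.mem_filter] at hv
      rw [hB, Finset.mem_filter] at hv'
      linarith [hv.2, hv'.2.2]
  -- f3
  have f3 : bad.card + G.card = 2 ^ n := by
    have hcompl : bad = Finset.univ.filter
        (fun v : Fin n → Bool => ¬ (∃ k ≤ n, x ≤ W n v k)) := by
      rw [hbad]
      apply Finset.filter_congr
      intro v _
      push_neg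
      rfl
    rw [hcompl, add_comm]
    have := Finset.card_filter_add_card_filter_not
      (s := (Finset.univ : Finset (Fin n → Bool)))
      (p := fun v => ∃ k ≤ n, x ≤ W n v k)
    rw [Finset.card_univ] at this
    simp only [Fintype.card_fun, Fintype.card_fin, Fintype.card_bool] at this
    rw [hG]
    convert this using 2
  -- f4
  have f4 : A.card = A'.card := by
    apply Finset.card_bij' (fun v _ => fun i => !(v i)) (fun v _ => fun i => !(v i))
    · intro v hv
      rw [hA, Finset.mem_filter] at hv
      rw [hA', Finset.mem_filter]
      refine ⟨Finset.mem_univ _, ?_⟩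
      rw [W_neg]
      linarith [hv.2]
    · intro v hv
      rw [hA', Finset.mem_filter] at hv
      rw [hA, Finset.mem_filter]
      refine ⟨Finset.mem_univ _, ?_⟩
      rw [W_neg]
      linarith [hv.2]
    · intro v _; funext i; simp
    · intro v _; funext i; simp
  -- f5
  have f5 : A'.card + Mid.card + A.card = 2 ^ n := by
    have s1 := Finset.card_filter_add_card_filter_not
      (s := (Finset.univ : Finset (Fin n → Bool)))
      (p := fun v => W n v n < -x)
    have s2 : Finset.univ.filter (fun v : Fin n → Bool => ¬ (W n v n < -x))
        = Mid ∪ A := by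
      ext v
      rw [Finset.mem_filter, Finset.mem_union, hMid, hA, Finset.mem_filter,
        Finset.mem_filter]
      constructor
      · rintro ⟨_, hv⟩
        push_neg at hv
        by_cases hle : W n v n ≤ x
        · exact Or.inl ⟨Finset.mem_univ _, hv, hle⟩
        · exact Or.inr ⟨Finset.mem_univ _, by linarith⟩
      · rintro (⟨_, hv1, _⟩ | ⟨_, hv⟩)
        · exact ⟨Finset.mem_univ _, by linarith⟩
        · exact ⟨Finset.mem_univ _, by linarith⟩
    have s3 : Disjoint Mid A := by
      rw [Finset.disjoint_left]
      intro v hv hv'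
      rw [hMid, Finset.mem_filter] at hv
      rw [hA, Finset.mem_filter] at hv'
      linarith [hv.2.2, hv'.2]
    rw [s2, Finset.card_union_of_disjoint s3, Finset.card_univ] at s1
    simp only [Fintype.card_fun, Fintype.card_fin, Fintype.card_bool] at s1
    rw [← hA'] at s1
    omega
  -- f6
  have f6 : (Mid.card : ℤ) ≤ (2 * x + 1) * n.choose (n / 2) := by
    have hsub : Mid ⊆ (Finset.Icc (-x) x).biUnion
        (fun k => Finset.univ.filter (fun v : Fin n → Bool => W n v n = k)) := by
      intro v hv
      rw [hMid, Finset.mem_filter] at hv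
      rw [Finset.mem_biUnion]
      exact ⟨W n v n, Finset.mem_Icc.mpr ⟨hv.2.1, hv.2.2⟩,
        Finset.mem_filter.mpr ⟨Finset.mem_univ _, rfl⟩⟩
    have hcard := le_trans (Finset.card_le_card hsub) (Finset.card_biUnion_le)
    have hsum : ∑ k ∈ Finset.Icc (-x) x,
        (Finset.univ.filter (fun v : Fin n → Bool => W n v n = k)).card
        ≤ (Finset.Icc (-x) x).card * n.choose (n / 2) := by
      apply Finset.sum_le_card_nsmul
      intro k _
      exact count_end n k
    have hIcc : ((Finset.Icc (-x) x).card : ℤ) = 2 * x + 1 := by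
      rw [Int.card_Icc]
      rw [Int.toNat_of_nonneg (by linarith)]
      ring
    have := le_trans hcard hsum
    calc (Mid.card : ℤ) ≤ ((Finset.Icc (-x) x).card * n.choose (n / 2) : ℕ) := by
          exact_mod_cast this
      _ = (2 * x + 1) * n.choose (n / 2) := by push_cast; rw [hIcc]
  -- combine
  have key : bad.card ≤ Mid.card := by omega
  calc ((bad.card : ℤ)) ≤ (Mid.card : ℤ) := by exact_mod_cast key
    _ ≤ (2 * x + 1) * n.choose (n / 2) := f6


lemma cb_sq : ∀ m : ℕ, (m + 1) * (Nat.centralBinom m)^2 ≤ 16 ^ m := by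
  intro m
  induction m with
  | zero => simp [Nat.centralBinom]
  | succ m ih =>
    have key := Nat.succ_mul_centralBinom_succ m
    refine Nat.le_of_mul_le_mul_left ?_ (show 0 < (m+1)^3 by positivity)
    have h1 : (m+1)^3 * ((m + 1 + 1) * Nat.centralBinom (m+1) ^ 2)
        = (m+1) * ((m+2) * ((m+1) * Nat.centralBinom (m+1))^2) := by ring
    rw [h1, key]
    have h2 : (m+1) * ((m+2) * (2 * (2*m+1) * Nat.centralBinom m)^2)
        = (m+2) * (4 * (2*m+1)^2) * ((m+1) * Nat.centralBinom m ^2) := by ring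
    rw [h2]
    calc (m+2) * (4 * (2*m+1)^2) * ((m+1) * Nat.centralBinom m ^2)
        ≤ (m+2) * (4 * (2*m+1)^2) * 16^m := Nat.mul_le_mul_left _ ih
      _ ≤ (m+1)^3 * 16^(m+1) := by
          have : (m+2) * (4 * (2*m+1)^2) ≤ (m+1)^3 * 16 := by nlinarith
          calc (m+2) * (4 * (2*m+1)^2) * 16^m ≤ ((m+1)^3 * 16) * 16^m :=
                Nat.mul_le_mul_right _ this
            _ = (m+1)^3 * 16^(m+1) := by ring
  
lemma choose_sq (n : ℕ) : (n + 1) * (n.choose (n/2))^2 ≤ 2 * 4 ^ n := by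
  rcases Nat.even_or_odd n with ⟨m, hm⟩ | ⟨m, hm⟩
  · subst hm
    have h : (m + m) / 2 = m := by omega
    rw [h]
    have : (m+m).choose m = Nat.centralBinom m := by rw [Nat.centralBinom]; congr 1; ring
    rw [this]
    have := cb_sq m
    have h16 : (16:ℕ)^m = 4^(m+m) := by
      rw [show (16:ℕ) = 4^2 by norm_num, ← pow_mul, two_mul]
    calc (m + m + 1) * Nat.centralBinom m ^ 2 ≤ 2 * ((m+1) * Nat.centralBinom m ^2) := by
          have h5 : (m+m+1) ≤ 2 * (m+1) := by omega
          calc (m + m + 1) * Nat.centralBinom m ^ 2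
              ≤ (2 * (m+1)) * Nat.centralBinom m ^ 2 := Nat.mul_le_mul h5 (le_refl _)
            _ = 2 * ((m+1) * Nat.centralBinom m ^2) := by ring
      _ ≤ 2 * 16^m := by omega
      _ = 2 * 4^(m+m) := by rw [h16]
  · subst hm
    have h : (2*m + 1) / 2 = m := by omega
    rw [h]
    have hch : (2*m+1).choose m ≤ 2 * Nat.centralBinom m := by
      have e1 : (2*m+1).choose m ≤ (2*m).choose m + (2*m).choose (m-1)  := by
        rcases m with _ | m'
        · simp
        · have h0 : 2*(m'+1)+1 = (2*m'+2)+1 := by ring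
          have h1 : 2*(m'+1) = 2*m'+2 := by ring
          rw [h0, h1, Nat.choose_succ_succ, Nat.add_sub_cancel, Nat.succ_eq_add_one]
          omega
      have e2 : (2*m).choose (m-1) ≤ (2*m).choose ((2*m)/2) := Nat.choose_le_middle _ _
      have e3 : (2*m)/2 = m := by omega
      rw [e3] at e2
      have : Nat.centralBinom m = (2*m).choose m := rfl
      omega
    calc (2*m+1+1) * ((2*m+1).choose m)^2 ≤ (2*m+2) * (2*Nat.centralBinom m)^2 := by
          apply Nat.mul_le_mul_left
          exact Nat.pow_le_pow_left hch 2
      _ = 8 * ((m+1) * Nat.centralBinom m ^2) := by ring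
      _ ≤ 8 * 16^m := Nat.mul_le_mul_left _ (cb_sq m)
      _ ≤ 2 * 4^(2*m+1) := by
          have : (16:ℕ)^m = 4^(2*m) := by rw [pow_mul]; norm_num
          rw [this, pow_succ]
          omega

variable {Ω : Type*} [MeasurableSpace Ω] (P : Measure Ω)
    [IsProbabilityMeasure P] (ζ : ℕ → Ω → ℤ) (hmeas : ∀ i, Measurable (ζ i))
    (hiid : iIndepFun ζ P)
    (h1 : ∀ i, P {ω | ζ i ω = 1} = 1 / 2)
    (h2 : ∀ i, P {ω | ζ i ω = -1} = 1 / 2)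

include hmeas h1 h2 in
lemma null_step (i : ℕ) : P {ω | ζ i ω ≠ 1 ∧ ζ i ω ≠ -1} = 0 := by
  have hA : MeasurableSet {ω | ζ i ω = 1} := (hmeas i) (measurableSet_singleton 1)
  have hB : MeasurableSet {ω | ζ i ω = -1} := (hmeas i) (measurableSet_singleton (-1))
  have hdisj : Disjoint {ω | ζ i ω = 1} {ω | ζ i ω = -1} := by
    rw [Set.disjoint_left]
    intro ω hω hω'
    simp only [Set.mem_setOf_eq] at hω hω'
    omega
  have hu : P ({ω | ζ i ω = 1} ∪ {ω | ζ i ω = -1}) = 1 := by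
    rw [measure_union hdisj hB, h1, h2]
    exact ENNReal.add_halves 1
  have hc : {ω | ζ i ω ≠ 1 ∧ ζ i ω ≠ -1} = ({ω | ζ i ω = 1} ∪ {ω | ζ i ω = -1})ᶜ := by
    ext ω; simp [not_or]
  rw [hc, measure_compl (hA.union hB) (measure_ne_top _ _), hu, measure_univ]
  simp

include hiid h1 h2 in
lemma cylinder_meas (n : ℕ) (e : ℕ → ℤ) (he : ∀ i, i < n → e i = 1 ∨ e i = -1) :
    P (⋂ i ∈ Finset.range n, ζ i ⁻¹' {e i}) = (1/2) ^ n := by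
  rw [hiid.measure_inter_preimage_eq_mul (Finset.range n)
    (sets := fun i => {e i}) (fun i _ => measurableSet_singleton _)]
  have : ∀ i ∈ Finset.range n, P (ζ i ⁻¹' {e i}) = 1/2 := by
    intro i hi
    rcases he i (Finset.mem_range.mp hi) with h | h <;> rw [h]
    · rw [show ζ i ⁻¹' {1} = {ω | ζ i ω = 1} from rfl]; exact h1 i
    · rw [show ζ i ⁻¹' {(-1 : ℤ)} = {ω | ζ i ω = -1} from rfl]; exact h2 i
  rw [Finset.prod_congr rfl this, Finset.prod_const, Finset.card_range]

def ev (n : ℕ) (v : Fin n → Bool) (i : ℕ) : ℤ :=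
  if h : i < n then bstep (v ⟨i, h⟩) else 1

include hmeas hiid h1 h2 in
lemma bridge (n : ℕ) (x : ℤ) :
    P {ω | ∀ k ≤ n, (∑ i ∈ Finset.range k, ζ i ω) < x}
      ≤ ((Finset.univ.filter (fun v : Fin n → Bool => ∀ k ≤ n, W n v k < x)).card : ℝ≥0∞)
          * (1/2) ^ n := by
  set badF := Finset.univ.filter (fun v : Fin n → Bool => ∀ k ≤ n, W n v k < x) with hbadF
  set N := ⋃ i : ℕ, {ω | ζ i ω ≠ 1 ∧ ζ i ω ≠ -1} with hN
  have hNnull : P N = 0 := measure_iUnion_null fun i => null_step P ζ hmeas h1 h2 i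
  have hcover : {ω | ∀ k ≤ n, (∑ i ∈ Finset.range k, ζ i ω) < x}
      ⊆ N ∪ ⋃ v ∈ badF, (⋂ i ∈ Finset.range n, ζ i ⁻¹' {ev n v i}) := by
    intro ω hω
    by_cases hωN : ω ∈ N
    · exact Or.inl hωN
    · right
      rw [hN] at hωN
      simp only [Set.mem_iUnion, Set.mem_setOf_eq, not_exists, not_and, not_not] at hωN
      have hval : ∀ i, ζ i ω = 1 ∨ ζ i ω = -1 := by
        intro i
        by_cases h : ζ i ω = 1
        · exact Or.inl h
        · exact Or.inr (hωN i h)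
      set v : Fin n → Bool := fun i => decide (ζ (i : ℕ) ω = 1) with hv
      have hstep : ∀ i : Fin n, ζ (i : ℕ) ω = bstep (v i) := by
        intro i
        rcases hval i with h | h <;> simp [hv, h, bstep]
      have hW : ∀ k, k ≤ n → (∑ i ∈ Finset.range k, ζ i ω) = W n v k := by
        intro k hk
        rw [W]
        apply Finset.sum_congr rfl
        intro i hi
        have hin : i < n := lt_of_lt_of_le (Finset.mem_range.mp hi) hk
        rw [stepAt, dif_pos hin]
        exact hstep ⟨i, hin⟩
      have hvbad : v ∈ badF := by
        rw [hbadF, Finset.mem_filter]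
        refine ⟨Finset.mem_univ _, fun k hk => ?_⟩
        rw [← hW k hk]
        exact hω k hk
      refine Set.mem_biUnion hvbad ?_
      simp only [Set.mem_iInter, Set.mem_preimage, Set.mem_singleton_iff]
      intro i hi
      have hin : i < n := Finset.mem_range.mp hi
      rw [ev, dif_pos hin]
      exact hstep ⟨i, hin⟩
  calc P {ω | ∀ k ≤ n, (∑ i ∈ Finset.range k, ζ i ω) < x}
      ≤ P (N ∪ ⋃ v ∈ badF, (⋂ i ∈ Finset.range n, ζ i ⁻¹' {ev n v i})) := measure_mono hcover
    _ ≤ P N + P (⋃ v ∈ badF, (⋂ i ∈ Finset.range n, ζ i ⁻¹' {ev n v i})) := measure_union_le _ _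
    _ = P (⋃ v ∈ badF, (⋂ i ∈ Finset.range n, ζ i ⁻¹' {ev n v i})) := by rw [hNnull, zero_add]
    _ ≤ ∑ v ∈ badF, P (⋂ i ∈ Finset.range n, ζ i ⁻¹' {ev n v i}) := measure_biUnion_finset_le _ _
    _ = ∑ v ∈ badF, (1/2 : ℝ≥0∞) ^ n := by
        apply Finset.sum_congr rfl
        intro v _
        exact cylinder_meas P ζ hiid h1 h2 n (ev n v)
          (fun i hi => by rw [ev, dif_pos hi]; cases v ⟨i, hi⟩ <;> simp [bstep])
    _ = (badF.card : ℝ≥0∞) * (1/2) ^ n := by rw [Finset.sum_const]; simp [nsmul_eq_mul]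


lemma choose_real (n : ℕ) :
    (n.choose (n/2) : ℝ) ≤ Real.sqrt 2 * 2^n / Real.sqrt (n+1) := by
  have h := choose_sq n
  have h' : ((n:ℝ)+1) * (n.choose (n/2) : ℝ)^2 ≤ 2 * 4^n := by exact_mod_cast h
  have hpos : (0:ℝ) < (n:ℝ) + 1 := by positivity
  have hsq : (n.choose (n/2) : ℝ)^2 ≤ 2 * 4^n / ((n:ℝ)+1) := by
    rw [le_div_iff₀ hpos]; linarith
  have h2 : (n.choose (n/2) : ℝ) = Real.sqrt ((n.choose (n/2) : ℝ)^2) :=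
    (Real.sqrt_sq (by positivity)).symm
  rw [h2]
  have h3 : Real.sqrt ((n.choose (n/2) : ℝ)^2) ≤ Real.sqrt (2 * 4^n / ((n:ℝ)+1)) :=
    Real.sqrt_le_sqrt hsq
  refine h3.trans (le_of_eq ?_)
  rw [Real.sqrt_div' _ ?pos]
  case pos => positivity
  · rw [Real.sqrt_mul (by norm_num)]
    congr 1
    · congr 1
      have : (4:ℝ)^n = ((2:ℝ)^n)^2 := by rw [← pow_mul, mul_comm, pow_mul]; norm_num
      rw [this, Real.sqrt_sq (by positivity)]

include hmeas hiid h1 h2 in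
lemma prob_le (n : ℕ) (x : ℤ) (hx : 0 ≤ x) :
    P {ω | ∀ k ≤ n, (∑ i ∈ Finset.range k, ζ i ω) < x}
      ≤ ENNReal.ofReal ((2*(x:ℝ)+1) * Real.sqrt 2 / Real.sqrt (n+1)) := by
  refine (bridge P ζ hmeas hiid h1 h2 n x).trans ?_
  set c := (Finset.univ.filter (fun v : Fin n → Bool => ∀ k ≤ n, W n v k < x)).card with hc
  have heq : ((c:ℝ≥0∞)) * (1/2)^n = ENNReal.ofReal ((c:ℝ) * (1/2)^n) := by
    rw [ENNReal.ofReal_mul (by positivity), ENNReal.ofReal_natCast,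
      ENNReal.ofReal_pow (by norm_num)]
    have : ENNReal.ofReal (1/2 : ℝ) = 2⁻¹ := by
      rw [ENNReal.ofReal_div_of_pos (by norm_num), ENNReal.ofReal_one,
        ENNReal.ofReal_ofNat, one_div]
    rw [this]
    norm_num
  rw [heq]
  apply ENNReal.ofReal_le_ofReal
  have hcount : (c : ℝ) ≤ (2*(x:ℝ)+1) * (n.choose (n/2)) := by
    have := count_main n x hx
    rw [← hc] at this
    exact_mod_cast this
  have hch := choose_real n
  have hsqrtpos : (0:ℝ) < Real.sqrt (n+1) := Real.sqrt_pos.mpr (by positivity)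
  have hxpos : (0:ℝ) ≤ 2*(x:ℝ)+1 := by
    have : (0:ℝ) ≤ (x:ℝ) := by exact_mod_cast hx
    linarith
  calc (c:ℝ) * (1/2)^n = (c:ℝ) / 2^n := by rw [div_pow]; ring
    _ ≤ ((2*(x:ℝ)+1) * (n.choose (n/2))) / 2^n := by gcongr
    _ ≤ ((2*(x:ℝ)+1) * (Real.sqrt 2 * 2^n / Real.sqrt (n+1))) / 2^n := by gcongr
    _ = (2*(x:ℝ)+1) * Real.sqrt 2 / Real.sqrt (n+1) := by
        field_simp

end
end SRWAux


open MeasureTheory ProbabilityTheory Filter SRWAux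

/-- For simple random walk on `ℤ` with running maximum `Mₙ`, for every `ε ∈ (0, 1/2)`,
almost surely `Mₙ ≥ n^{1/2-ε}` for all but finitely many `n`. -/
theorem srw_max_growth {Ω : Type*} [MeasurableSpace Ω] (P : Measure Ω)
    [IsProbabilityMeasure P] (ζ : ℕ → Ω → ℤ) (hmeas : ∀ i, Measurable (ζ i))
    (hiid : iIndepFun ζ P)
    (h1 : ∀ i, P {ω | ζ i ω = 1} = 1 / 2)
    (h2 : ∀ i, P {ω | ζ i ω = -1} = 1 / 2)
    (ε : ℝ) (hε : ε ∈ Set.Ioo (0 : ℝ) (1 / 2)) :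
    ∀ᵐ ω ∂P, ∀ᶠ n : ℕ in atTop,
      (n : ℝ) ^ ((1 : ℝ) / 2 - ε) ≤
        (((Finset.range (n + 1)).sup' Finset.nonempty_range_add_one
          fun k => ∑ i ∈ Finset.range k, ζ i ω : ℤ) : ℝ) := by
  obtain ⟨hε0, hεhalf⟩ := hε
  set Q : ℝ := 1/2 - ε with hQ
  have hgoalQ : (1 : ℝ) / 2 - ε = Q := rfl
  have hQ0 : 0 ≤ Q := by rw [hQ]; linarith
  have hQhalf : Q < 1/2 := by rw [hQ]; linarith
  set u : ℕ → ℝ := fun j => ((2:ℝ)^(j+1)) ^ Q with hu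
  set xj : ℕ → ℤ := fun j => ⌈u j⌉ with hxj
  have hupos : ∀ j, 0 < u j := fun j => Real.rpow_pos_of_pos (by positivity) _
  have hxj0 : ∀ j, 0 ≤ xj j := fun j => Int.ceil_nonneg (hupos j).le
  set s : ℕ → Set Ω :=
    fun j => {ω | ∀ k ≤ 2^j, (∑ i ∈ Finset.range k, ζ i ω) < xj j} with hs
  set c : ℝ := (2:ℝ) ^ Q with hcdef
  have hc1 : 1 ≤ c := Real.one_le_rpow (by norm_num) hQ0
  have hc0 : 0 ≤ c := le_trans zero_le_one hc1
  have hsqrt2 : Real.sqrt 2 = (2:ℝ) ^ ((1:ℝ)/2) := Real.sqrt_eq_rpow 2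
  have hcsqrt : c < Real.sqrt 2 := by
    rw [hsqrt2, hcdef]
    exact Real.rpow_lt_rpow_of_exponent_lt (by norm_num) hQhalf
  have hs2pos : (0:ℝ) < Real.sqrt 2 := Real.sqrt_pos.mpr (by norm_num)
  set a : ℝ := c / Real.sqrt 2 with hadef
  have ha0 : 0 ≤ a := div_nonneg hc0 hs2pos.le
  have ha1 : a < 1 := (div_lt_one hs2pos).mpr hcsqrt
  set b : ℝ := (Real.sqrt 2)⁻¹ with hbdef
  have hs2gt1 : 1 < Real.sqrt 2 := by
    have h12 : (1:ℝ) < 2 := by norm_num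
    calc (1:ℝ) = Real.sqrt 1 := (Real.sqrt_one).symm
      _ < Real.sqrt 2 := (Real.sqrt_lt_sqrt (by norm_num) h12)
  have hb0 : 0 ≤ b := inv_nonneg.mpr hs2pos.le
  have hb1 : b < 1 := by
    rw [hbdef]
    exact inv_lt_one_of_one_lt₀ hs2gt1
  set r : ℕ → ℝ := fun j => 2*Real.sqrt 2*c * a^j + 3*Real.sqrt 2 * b^j with hrdef
  have hr0 : ∀ j, 0 ≤ r j := by
    intro j
    have h1' : (0:ℝ) ≤ a^j := pow_nonneg ha0 j
    have h2' : (0:ℝ) ≤ b^j := pow_nonneg hb0 j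
    have : (0:ℝ) ≤ 2*Real.sqrt 2*c * a^j := by positivity
    have : (0:ℝ) ≤ 3*Real.sqrt 2 * b^j := by positivity
    rw [hrdef]
    positivity
  have hu_eq : ∀ j, u j = c * c^j := by
    intro j
    rw [hu]
    simp only
    rw [show ((2:ℝ)^(j+1)) = (2:ℝ) ^ ((j+1 : ℕ) : ℝ) from (Real.rpow_natCast 2 (j+1)).symm]
    rw [← Real.rpow_mul (by norm_num), mul_comm ((j+1 : ℕ) : ℝ) Q,
      Real.rpow_mul (by norm_num), Real.rpow_natCast, ← hcdef, pow_succ]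
    ring
  have hsqrt_lb : ∀ j : ℕ, (Real.sqrt 2)^j ≤ Real.sqrt ((2:ℝ)^j + 1) := by
    intro j
    apply Real.le_sqrt_of_sq_le
    have : ((Real.sqrt 2)^j)^2 = ((Real.sqrt 2)^2)^j := by
      rw [← pow_mul, ← pow_mul, mul_comm]
    rw [this, Real.sq_sqrt (by norm_num)]
    linarith
  have hr : ∀ j, P (s j) ≤ ENNReal.ofReal (r j) := by
    intro j
    refine (prob_le P ζ hmeas hiid h1 h2 (2^j) (xj j) (hxj0 j)).trans
      (ENNReal.ofReal_le_ofReal ?_)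
    have hceil : (xj j : ℝ) ≤ u j + 1 := by
      rw [hxj]
      exact le_of_lt (Int.ceil_lt_add_one _)
    have hnum : 2*((xj j : ℤ) : ℝ)+1 ≤ 2*c*c^j + 3 := by
      have := hu_eq j
      nlinarith [hceil]
    have hpowpos : (0:ℝ) < (Real.sqrt 2)^j := pow_pos hs2pos j
    have hcast : (((2:ℕ)^j : ℕ) : ℝ) + 1 = (2:ℝ)^j + 1 := by push_cast; ring
    calc (2*((xj j : ℤ) : ℝ)+1) * Real.sqrt 2 / Real.sqrt ((((2:ℕ)^j : ℕ)) + 1)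
        ≤ (2*c*c^j + 3) * Real.sqrt 2 / (Real.sqrt 2)^j := by
          rw [hcast]
          have hnum2 : (2*((xj j : ℤ) : ℝ)+1) * Real.sqrt 2 ≤ (2*c*c^j + 3) * Real.sqrt 2 := by
            apply mul_le_mul_of_nonneg_right hnum hs2pos.le
          have hx0 : (0:ℝ) ≤ (xj j : ℝ) := by exact_mod_cast hxj0 j
          exact div_le_div₀ (by positivity) hnum2 hpowpos (hsqrt_lb j)
      _ = r j := by
          rw [hrdef]
          simp only
          rw [hadef, hbdef, div_pow, inv_pow]
          field_simp
  have hsummable : Summable r := by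
    apply Summable.add
    · exact (summable_geometric_of_lt_one ha0 ha1).mul_left _
    · exact (summable_geometric_of_lt_one hb0 hb1).mul_left _
  have htsum : (∑' j, P (s j)) ≠ ⊤ := by
    refine ne_top_of_le_ne_top ?_ (ENNReal.tsum_le_tsum hr)
    rw [← ENNReal.ofReal_tsum_of_nonneg hr0 hsummable]
    exact ENNReal.ofReal_ne_top
  have hBC := MeasureTheory.ae_eventually_notMem (μ := P) htsum
  filter_upwards [hBC] with ω hω
  obtain ⟨J, hJ⟩ := eventually_atTop.mp hω
  rw [eventually_atTop]
  refine ⟨2^J + 1, fun n hn => ?_⟩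
  have hn0 : n ≠ 0 := by
    have hp : 1 ≤ 2^J := Nat.one_le_two_pow
    omega
  set j := Nat.log 2 n with hj
  have hj1 : 2^j ≤ n := Nat.pow_log_le_self 2 hn0
  have hj2 : n < 2^(j+1) := Nat.lt_pow_succ_log_self (by norm_num) n
  have hjJ : J ≤ j := by
    rw [hj]
    exact (Nat.le_log_iff_pow_le (by norm_num) hn0).mpr (by omega)
  have hωj := hJ j hjJ
  rw [hs] at hωj
  simp only [Set.mem_setOf_eq, not_forall, not_lt, exists_prop] at hωj
  obtain ⟨k, hk, hkx⟩ := hωj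
  set M : ℤ := (Finset.range (n + 1)).sup' Finset.nonempty_range_add_one
    (fun k => ∑ i ∈ Finset.range k, ζ i ω) with hM
  have hMx : xj j ≤ M := by
    refine le_trans hkx ?_
    have hkn : k < n + 1 := by
      have := hj1
      omega
    exact Finset.le_sup' (fun k => ∑ i ∈ Finset.range k, ζ i ω)
      (Finset.mem_range.mpr hkn)
  have step1 : (n:ℝ) ^ Q ≤ u j := by
    rw [hu]
    simp only
    apply Real.rpow_le_rpow (by positivity) ?_ hQ0
    have : (n:ℝ) < ((2^(j+1) : ℕ) : ℝ) := by exact_mod_cast hj2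
    push_cast at this ⊢
    linarith
  have step2 : u j ≤ ((xj j : ℤ) : ℝ) := by
    rw [hxj]
    exact Int.le_ceil _
  have step3 : ((xj j : ℤ) : ℝ) ≤ (M : ℝ) := by exact_mod_cast hMx
  linarith
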